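/- Midpoint inequality from the ⊠-inequalities (Proposition 7.1 specialization): let (X,d) be a metric space satisfying the ⊠-inequalities, and let x, y, z ∈ X with x ≠ z and d(x,z) = d(x,y) + d(y,z). Set t = d(x,y)/d(x,z). Then for every w ∈ X, d(y,w)² ≤ (1-t)·d(x,w)² + t·d(z,w)² - t(1-t)·d(x,z)². -/
import Mathlib


/-- The ⊠-inequalities for a metric space. -/
def BoxtimesIneq (X : Type*) [MetricSpace X] : Prop :=
  ∀ t s : ℝ, t ∈ Set.Icc (0 : ℝ) 1 → s ∈ Set.Icc (0 : ℝ) 1 → ∀ x y z w : X,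
    0 ≤ (1 - t) * (1 - s) * dist x y ^ 2 + t * (1 - s) * dist y z ^ 2
      + t * s * dist z w ^ 2 + (1 - t) * s * dist w x ^ 2
      - t * (1 - t) * dist x z ^ 2 - s * (1 - s) * dist y w ^ 2

theorem stmt_15 {X : Type*} [MetricSpace X] (hX : BoxtimesIneq X)
    (x y z : X) (hxz : x ≠ z) (hbtw : dist x z = dist x y + dist y z)
    (t : ℝ) (ht : t = dist x y / dist x z) :
    ∀ w : X, dist y w ^ 2 ≤ (1 - t) * dist x w ^ 2 + t * dist z w ^ 2
      - t * (1 - t) * dist x z ^ 2 := by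
  intro w
  have hD : 0 < dist x z := dist_pos.mpr hxz
  have hxy : dist x y = t * dist x z := by
    rw [ht]; field_simp
  have hyz : dist y z = (1 - t) * dist x z := by nlinarith [hbtw, hxy]
  have ht0 : 0 ≤ t := by
    rw [ht]; positivity
  have ht1 : t ≤ 1 := by
    rw [ht, div_le_one hD]
    nlinarith [dist_nonneg (x := y) (y := z)]
  apply le_of_forall_pos_le_add
  intro ε hε
  set s : ℝ := min 1 (ε / (dist y w ^ 2 + 1)) with hs
  have hdw : (0:ℝ) < dist y w ^ 2 + 1 := by positivity
  have hs0 : 0 < s := lt_min one_pos (by positivity)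
  have hs1 : s ≤ 1 := min_le_left _ _
  have hsε : s * dist y w ^ 2 ≤ ε := by
    have h1 : s ≤ ε / (dist y w ^ 2 + 1) := min_le_right _ _
    have h2 : s * dist y w ^ 2 ≤ (ε / (dist y w ^ 2 + 1)) * dist y w ^ 2 := by
      apply mul_le_mul_of_nonneg_right h1 (by positivity)
    calc s * dist y w ^ 2 ≤ (ε / (dist y w ^ 2 + 1)) * dist y w ^ 2 := h2
      _ ≤ ε := by
        rw [div_mul_eq_mul_div, div_le_iff₀ hdw]
        nlinarith
  have key := hX t s ⟨ht0, ht1⟩ ⟨le_of_lt hs0, hs1⟩ x y z w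
  rw [hxy, hyz, dist_comm w x] at key
  nlinarith [key, hs0, mul_pos hs0 hD, sq_nonneg (dist x z)]
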